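/- Projected gradient descent with exact line search converges to stationary points: let X ⊆ ℝ^n be a nonempty closed convex set and f : ℝ^n → ℝ be continuously differentiable. Let {x^(k)}, {s^(k)}, {α^(k)} be sequences with x^(0) ∈ X and, for every k: s^(k) is the (unique) point of X minimizing ‖x^(k) − ∇f(x^(k)) − z‖ over z ∈ X (the metric projection of x^(k) − ∇f(x^(k)) onto X); α^(k) ∈ argmin_{α∈[0,1]} f(x^(k) + α(s^(k) − x^(k))); and x^(k+1) = x^(k) + α^(k)(s^(k) − x^(k)). Then every limit point x* of {x^(k)} satisfies ⟨∇f(x*), y − x*⟩ ≥ 0 for all y ∈ X, i.e. x* is a stationary point of min_{x∈X} f(x). -/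

import Mathlib

open RealInnerProductSpace

section helpers
variable {E : Type*} [NormedAddCommGroup E] [InnerProductSpace ℝ E]

lemma pgd_key1 (a b G : E) (h : ⟪a - G - b, a - b⟫ ≤ 0) :
    ‖b - a‖ ^ 2 ≤ -⟪G, b - a⟫ := by
  have e1 : a - G - b = (a - b) - G := by abel
  rw [e1, inner_sub_left, real_inner_self_eq_norm_sq] at h
  have e2 : b - a = -(a - b) := by abel
  rw [e2, inner_neg_right, norm_neg]
  linarith

lemma pgd_key2 (a b G y : E) (h : ⟪a - G - b, y - b⟫ ≤ 0) :
    -⟪G, y - a⟫ ≤ ‖b - a‖ * ‖y - a‖ + (-⟪G, b - a⟫) := by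
  have e1 : a - G - b = (a - b) - G := by abel
  rw [e1, inner_sub_left] at h
  have e2 : (y : E) - a = (y - b) + (b - a) := by abel
  have e3 : ⟪G, y - a⟫ = ⟪G, y - b⟫ + ⟪G, b - a⟫ := by rw [e2, inner_add_right]
  have e4 : (y : E) - b = (y - a) + (a - b) := by abel
  have e5 : ⟪a - b, y - b⟫ = ⟪a - b, y - a⟫ + ⟪a - b, a - b⟫ := by
    rw [e4, inner_add_right]
  have h6 : (0:ℝ) ≤ ⟪a - b, a - b⟫ := real_inner_self_nonneg
  have h7 : -(‖a - b‖ * ‖y - a‖) ≤ ⟪a - b, y - a⟫ := by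
    linarith [abs_real_inner_le_norm (a - b) (y - a), neg_abs_le (⟪a - b, y - a⟫)]
  have e8 : ‖a - b‖ = ‖b - a‖ := by rw [← neg_sub, norm_neg]
  rw [e8] at h7
  linarith [h, e3, e5, h6, h7]

lemma pgd_key3 (G d : E) (h : ‖d‖ ^ 2 ≤ -⟪G, d⟫) : ‖d‖ ≤ ‖G‖ := by
  rcases eq_or_lt_of_le (norm_nonneg d) with h0 | h0
  · rw [← h0]; exact norm_nonneg _
  · have hcs : -⟪G, d⟫ ≤ ‖G‖ * ‖d‖ := by
      linarith [abs_real_inner_le_norm G d, neg_abs_le (⟪G, d⟫)]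
    have : ‖d‖ * ‖d‖ ≤ ‖G‖ * ‖d‖ := by nlinarith
    exact le_of_mul_le_mul_right this h0

lemma pgd_proj {X : Set E} (hXconvex : Convex ℝ X) (u v : E) (hv : v ∈ X)
    (hmin : ∀ z ∈ X, ‖u - v‖ ≤ ‖u - z‖) :
    ∀ w ∈ X, ⟪u - v, w - v⟫ ≤ 0 := by
  rw [← norm_eq_iInf_iff_real_inner_le_zero hXconvex hv]
  haveI : Nonempty X := ⟨⟨v, hv⟩⟩
  have hbdd : BddBelow (Set.range fun w : X => ‖u - (w : E)‖) := by
    refine ⟨0, ?_⟩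
    rintro a ⟨w, rfl⟩
    exact norm_nonneg _
  refine le_antisymm (le_ciInf fun w => hmin w w.2) ?_
  exact ciInf_le hbdd (⟨v, hv⟩ : X)

lemma pgd_E4 (c R D N T δ : ℝ) (hc : 0 < c) (hR : 0 < R)
    (hD : 0 ≤ D) (hN0 : 0 ≤ N) (hN : N ≤ R)
    (hkey1 : D ^ 2 ≤ T) (h1 : c / 2 ≤ D * N + T)
    (hδ : δ = min (c / 4) ((c / (4 * R)) ^ 2)) : δ ≤ T := by
  by_cases hcase : D ≤ c / (4 * R)
  · have hmul : D * N ≤ (c / (4 * R)) * R := mul_le_mul hcase hN hN0 (by positivity)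
    have heq : (c / (4 * R)) * R = c / 4 := by field_simp
    have hmin := min_le_left (c / 4) ((c / (4 * R)) ^ 2)
    rw [hδ]
    linarith
  · push_neg at hcase
    have h1' : (c / (4 * R)) ^ 2 ≤ D ^ 2 := pow_le_pow_left₀ (by positivity) hcase.le 2
    have hmin := min_le_right (c / 4) ((c / (4 * R)) ^ 2)
    rw [hδ]
    linarith

lemma pgd_seg (G1 G2 dd : E) (C δ ε : ℝ) (hC : 0 < C) (hdd : ‖dd‖ ≤ C)
    (hdiff : ‖G2 - G1‖ ≤ 2 * ε) (hG1 : ⟪G1, dd⟫ ≤ -δ) (hεC : 2 * ε * C = δ / 2) :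
    ⟪G2, dd⟫ ≤ -δ / 2 := by
  have hsplit : ⟪G2, dd⟫ = ⟪G1, dd⟫ + ⟪G2 - G1, dd⟫ := by
    rw [inner_sub_left]; ring
  have hbnd : ⟪G2 - G1, dd⟫ ≤ 2 * ε * C := by
    calc ⟪G2 - G1, dd⟫ ≤ ‖G2 - G1‖ * ‖dd‖ := real_inner_le_norm _ _
      _ ≤ 2 * ε * C := mul_le_mul hdiff hdd (norm_nonneg _)
          (le_trans (norm_nonneg _) hdiff)
  rw [hsplit]
  linarith

end helpers

lemma pgd_mvt {n : ℕ} (f : EuclideanSpace ℝ (Fin n) → ℝ) (hf : ContDiff ℝ 1 f)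
    (a dd : EuclideanSpace ℝ (Fin n)) (α₀ δ : ℝ) (hα₀ : 0 < α₀)
    (hseg : ∀ τ : ℝ, 0 ≤ τ → τ ≤ α₀ → ⟪gradient f (a + τ • dd), dd⟫ ≤ -δ / 2) :
    f (a + α₀ • dd) ≤ f a - α₀ * δ / 2 := by
  have hψd : ∀ τ : ℝ, HasDerivAt (fun τ : ℝ => f (a + τ • dd))
      (⟪gradient f (a + τ • dd), dd⟫) τ := by
    intro τ
    have h1 : HasDerivAt (fun τ : ℝ => a + τ • dd) dd τ := by
      simpa using ((hasDerivAt_id τ).smul_const dd).const_add a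
    have h2 := (hf.differentiable one_ne_zero (a + τ • dd)).hasFDerivAt
    have := h2.comp_hasDerivAt τ h1
    convert this using 1
    · rfl
    · rfl
    · rfl
    rw [gradient]
    exact InnerProductSpace.toDual_symm_apply
  have hψcont : ContinuousOn (fun τ : ℝ => f (a + τ • dd)) (Set.Icc 0 α₀) :=
    (hf.continuous.comp (continuous_const.add (continuous_id.smul continuous_const))).continuousOn
  obtain ⟨ξ, hξmem, hξeq⟩ := exists_hasDerivAt_eq_slope (fun τ : ℝ => f (a + τ • dd))
    (fun τ => ⟪gradient f (a + τ • dd), dd⟫) hα₀ hψcont (fun τ _ => hψd τ)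
  have hle := hseg ξ hξmem.1.le hξmem.2.le
  rw [hξeq, sub_zero] at hle
  have hle' : (f (a + α₀ • dd) - f a) / α₀ ≤ -δ / 2 := by simpa using hle
  have := (div_le_iff₀ hα₀).mp hle'
  linarith

set_option maxHeartbeats 1000000 in
theorem stmt8 (n : ℕ)
    (X : Set (EuclideanSpace ℝ (Fin n)))
    (hXne : X.Nonempty) (hXclosed : IsClosed X) (hXconvex : Convex ℝ X)
    (f : EuclideanSpace ℝ (Fin n) → ℝ) (hf : ContDiff ℝ 1 f)
    (x s : ℕ → EuclideanSpace ℝ (Fin n)) (α : ℕ → ℝ)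
    (hx0 : x 0 ∈ X)
    (hs : ∀ k, s k ∈ X ∧ ∀ z ∈ X,
      ‖x k - gradient f (x k) - s k‖ ≤ ‖x k - gradient f (x k) - z‖)
    (hα : ∀ k, α k ∈ Set.Icc (0 : ℝ) 1 ∧ ∀ β ∈ Set.Icc (0 : ℝ) 1,
      f (x k + α k • (s k - x k)) ≤ f (x k + β • (s k - x k)))
    (hupd : ∀ k, x (k + 1) = x k + α k • (s k - x k))
    (xstar : EuclideanSpace ℝ (Fin n)) (φ : ℕ → ℕ) (hφ : StrictMono φ)
    (hlim : Filter.Tendsto (fun k => x (φ k)) Filter.atTop (nhds xstar)) :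
    ∀ y ∈ X, 0 ≤ (inner ℝ (gradient f xstar) (y - xstar) : ℝ) := by
  have hgcont : Continuous (gradient f) := by
    have := hf.continuous_fderiv one_ne_zero
    exact (InnerProductSpace.toDual ℝ _).symm.continuous.comp this
  -- iterates stay in X
  have hxX : ∀ k, x k ∈ X := by
    intro k
    induction k with
    | zero => exact hx0
    | succ k ih =>
      rw [hupd k]
      have e : x k + α k • (s k - x k) = (1 - α k) • x k + α k • s k := by
        rw [smul_sub, sub_smul, one_smul]; abel
      rw [e]
      exact hXconvex ih (hs k).1 (by linarith [(hα k).1.2]) (hα k).1.1 (by ring)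
  -- monotone decrease
  have hmono : ∀ k, f (x (k + 1)) ≤ f (x k) := by
    intro k
    have := (hα k).2 0 ⟨le_refl 0, zero_le_one⟩
    rw [hupd k]
    simpa using this
  have hAnti : Antitone fun k => f (x k) := antitone_nat_of_succ_le hmono
  have hflim : Filter.Tendsto (fun k => f (x (φ k))) Filter.atTop (nhds (f xstar)) :=
    ((hf.continuous.tendsto xstar).comp hlim)
  have hstarle : ∀ j, f xstar ≤ f (x j) := by
    intro j
    refine le_of_tendsto hflim ?_
    filter_upwards [Filter.eventually_ge_atTop j] with k hk
    exact hAnti (hk.trans (hφ.id_le k))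
  -- contradiction setup
  by_contra hcon
  push_neg at hcon
  obtain ⟨y, hyX, hneg⟩ := hcon
  obtain ⟨c, hcdef⟩ : ∃ c : ℝ, c = -(inner ℝ (gradient f xstar) (y - xstar) : ℝ) := ⟨_, rfl⟩
  have hc : 0 < c := by rw [hcdef]; exact neg_pos.mpr hneg
  -- projection inequality
  have hproj : ∀ k, ∀ w ∈ X, ⟪x k - gradient f (x k) - s k, w - s k⟫ ≤ 0 := by
    intro k
    exact pgd_proj hXconvex (x k - gradient f (x k)) (s k) (hs k).1 (hs k).2
  have key1 : ∀ k, ‖s k - x k‖ ^ 2 ≤ -⟪gradient f (x k), s k - x k⟫ := fun k =>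
    pgd_key1 (x k) (s k) (gradient f (x k)) (hproj k (x k) (hxX k))
  have key2 : ∀ k, -⟪gradient f (x k), y - x k⟫ ≤
      ‖s k - x k‖ * ‖y - x k‖ + (-⟪gradient f (x k), s k - x k⟫) := fun k =>
    pgd_key2 (x k) (s k) (gradient f (x k)) y (hproj k y hyX)
  have key3 : ∀ k, ‖s k - x k‖ ≤ ‖gradient f (x k)‖ := fun k =>
    pgd_key3 (gradient f (x k)) (s k - x k) (key1 k)
  -- convergence along subsequence
  have hG : Filter.Tendsto (fun k => gradient f (x (φ k))) Filter.atTop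
      (nhds (gradient f xstar)) := (hgcont.tendsto xstar).comp hlim
  have hInner : Filter.Tendsto (fun k => -⟪gradient f (x (φ k)), y - x (φ k)⟫)
      Filter.atTop (nhds c) := by
    rw [hcdef]
    exact (hG.inner (Filter.Tendsto.sub tendsto_const_nhds hlim)).neg
  obtain ⟨R, hRdef⟩ : ∃ R : ℝ, R = ‖y - xstar‖ + 1 := ⟨_, rfl⟩
  have hRpos : 0 < R := by rw [hRdef]; positivity
  obtain ⟨C, hCdef⟩ : ∃ C : ℝ, C = ‖gradient f xstar‖ + 1 := ⟨_, rfl⟩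
  have hCpos : 0 < C := by rw [hCdef]; positivity
  obtain ⟨δ, hδdef⟩ : ∃ δ : ℝ, δ = min (c / 4) ((c / (4 * R)) ^ 2) := ⟨_, rfl⟩
  have hδpos : 0 < δ := by rw [hδdef]; exact lt_min (by positivity) (by positivity)
  have E1 : ∀ᶠ k in Filter.atTop, c / 2 ≤ -⟪gradient f (x (φ k)), y - x (φ k)⟫ :=
    hInner.eventually (eventually_ge_nhds (by linarith))
  have E2 : ∀ᶠ k in Filter.atTop, ‖y - x (φ k)‖ ≤ R := by
    have h : Filter.Tendsto (fun k => ‖y - x (φ k)‖) Filter.atTop (nhds ‖y - xstar‖) :=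
      (Filter.Tendsto.sub tendsto_const_nhds hlim).norm
    exact h.eventually (eventually_le_nhds (by rw [hRdef]; linarith))
  have E3 : ∀ᶠ k in Filter.atTop, ‖gradient f (x (φ k))‖ ≤ C :=
    hG.norm.eventually (eventually_le_nhds (by rw [hCdef]; linarith))
  have E4 : ∀ᶠ k in Filter.atTop, δ ≤ -⟪gradient f (x (φ k)), s (φ k) - x (φ k)⟫ := by
    filter_upwards [E1, E2] with k h1 h2
    exact pgd_E4 c R ‖s (φ k) - x (φ k)‖ ‖y - x (φ k)‖
      (-⟪gradient f (x (φ k)), s (φ k) - x (φ k)⟫) δ hc hRpos (norm_nonneg _)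
      (norm_nonneg _) h2 (key1 (φ k)) (le_trans h1 (key2 (φ k))) hδdef
  have E5 : ∀ᶠ k in Filter.atTop, ‖s (φ k) - x (φ k)‖ ≤ C := by
    filter_upwards [E3] with k h3
    exact (key3 (φ k)).trans h3
  -- continuity of gradient at xstar
  obtain ⟨ε, hεdef⟩ : ∃ ε : ℝ, ε = δ / (4 * C) := ⟨_, rfl⟩
  have hεpos : 0 < ε := by rw [hεdef]; positivity
  obtain ⟨ρ0, hρ0pos, hρ0⟩ := Metric.continuousAt_iff.mp hgcont.continuousAt ε hεpos
  obtain ⟨ρ, hρdef⟩ : ∃ ρ : ℝ, ρ = ρ0 / 2 := ⟨_, rfl⟩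
  have hρpos : 0 < ρ := by rw [hρdef]; positivity
  have hgnear : ∀ z, ‖z - xstar‖ ≤ ρ → ‖gradient f z - gradient f xstar‖ ≤ ε := by
    intro z hz
    have h : dist z xstar < ρ0 := by rw [dist_eq_norm]; rw [hρdef] at hz; linarith
    have := hρ0 h
    rw [dist_eq_norm] at this
    exact this.le
  obtain ⟨α₀, hα₀def⟩ : ∃ v : ℝ, v = min 1 (ρ / (2 * C)) := ⟨_, rfl⟩
  have hα₀pos : 0 < α₀ := by rw [hα₀def]; exact lt_min one_pos (by positivity)
  have hα₀le1 : α₀ ≤ 1 := by rw [hα₀def]; exact min_le_left _ _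
  have hα₀C : α₀ * C ≤ ρ / 2 := by
    have h1 : α₀ ≤ ρ / (2 * C) := by rw [hα₀def]; exact min_le_right _ _
    calc α₀ * C ≤ (ρ / (2 * C)) * C := mul_le_mul_of_nonneg_right h1 hCpos.le
      _ = ρ / 2 := by field_simp
  have E6 : ∀ᶠ k in Filter.atTop, ‖x (φ k) - xstar‖ ≤ ρ / 2 := by
    have h : Filter.Tendsto (fun k => ‖x (φ k) - xstar‖) Filter.atTop (nhds 0) := by
      simpa using (hlim.sub (tendsto_const_nhds : Filter.Tendsto _ _ (nhds xstar))).norm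
    exact h.eventually (eventually_le_nhds (by positivity : (0:ℝ) < ρ / 2))
  have E7 : ∀ᶠ k in Filter.atTop, f (x (φ k)) < f xstar + α₀ * δ / 2 :=
    hflim.eventually (eventually_lt_nhds (by nlinarith))
  obtain ⟨k, h4, h5, h6, h7⟩ := (E4.and (E5.and (E6.and E7))).exists
  -- gradient bound on the segment
  have h2εC : 2 * ε * C = δ / 2 := by rw [hεdef]; field_simp; ring
  have hseg : ∀ τ : ℝ, 0 ≤ τ → τ ≤ α₀ →
      ⟪gradient f (x (φ k) + τ • (s (φ k) - x (φ k))), s (φ k) - x (φ k)⟫ ≤ -δ / 2 := by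
    intro τ hτ0 hτ1
    have hdist : ‖x (φ k) + τ • (s (φ k) - x (φ k)) - xstar‖ ≤ ρ := by
      have e : x (φ k) + τ • (s (φ k) - x (φ k)) - xstar
          = (x (φ k) - xstar) + τ • (s (φ k) - x (φ k)) := by abel
      rw [e]
      calc ‖(x (φ k) - xstar) + τ • (s (φ k) - x (φ k))‖
          ≤ ‖x (φ k) - xstar‖ + ‖τ • (s (φ k) - x (φ k))‖ := norm_add_le _ _
        _ ≤ ρ / 2 + τ * ‖s (φ k) - x (φ k)‖ := by
            rw [norm_smul, Real.norm_eq_abs, abs_of_nonneg hτ0]; linarith [h6]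
        _ ≤ ρ / 2 + α₀ * C := by
            nlinarith [norm_nonneg (s (φ k) - x (φ k)), h5]
        _ ≤ ρ := by linarith
    have hga : ‖gradient f (x (φ k)) - gradient f xstar‖ ≤ ε :=
      hgnear _ (by linarith [h6] : ‖x (φ k) - xstar‖ ≤ ρ)
    have hgτ : ‖gradient f (x (φ k) + τ • (s (φ k) - x (φ k))) - gradient f xstar‖ ≤ ε :=
      hgnear _ hdist
    have hdiff : ‖gradient f (x (φ k) + τ • (s (φ k) - x (φ k))) - gradient f (x (φ k))‖
        ≤ 2 * ε := by
      calc ‖gradient f (x (φ k) + τ • (s (φ k) - x (φ k))) - gradient f (x (φ k))‖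
          = ‖(gradient f (x (φ k) + τ • (s (φ k) - x (φ k))) - gradient f xstar)
              - (gradient f (x (φ k)) - gradient f xstar)‖ := by congr 1; abel
        _ ≤ ‖gradient f (x (φ k) + τ • (s (φ k) - x (φ k))) - gradient f xstar‖
              + ‖gradient f (x (φ k)) - gradient f xstar‖ := norm_sub_le _ _
        _ ≤ 2 * ε := by linarith
    exact pgd_seg (gradient f (x (φ k)))
      (gradient f (x (φ k) + τ • (s (φ k) - x (φ k)))) (s (φ k) - x (φ k))
      C δ ε hCpos h5 hdiff (by linarith [h4]) h2εC
  -- mean value theorem and line search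
  have hmvt := pgd_mvt f hf (x (φ k)) (s (φ k) - x (φ k)) α₀ δ hα₀pos hseg
  have hls : f (x (φ k + 1)) ≤ f (x (φ k) + α₀ • (s (φ k) - x (φ k))) := by
    rw [hupd (φ k)]
    exact (hα (φ k)).2 α₀ ⟨hα₀pos.le, hα₀le1⟩
  have hlb := hstarle (φ k + 1)
  linarith
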